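/- Let Q(x) = x₁² + x₂² + x₃² + x₄² over ℤ/2^ν for ν ≥ 5, and fix m odd. Every solution of Q(x) ≡ m (mod 2⁵) with at least one odd coordinate lifts to exactly 2^{3(ν-5)} solutions of Q(x) ≡ m (mod 2^ν) (i.e., the number of solutions mod 2^ν of Q(x) ≡ m having some coordinate odd equals 2^{3(ν-5)} times the number of such solutions mod 2⁵). -/

import Mathlib

open Finset

namespace GoodLift2

abbrev R (k : ℕ) := ZMod (2 ^ (k + 1))
abbrev r (k : ℕ) := ZMod (2 ^ k)

instance (k : ℕ) : NeZero ((2:ℕ) ^ k) := ⟨by positivity⟩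

def pr (k : ℕ) : R k →+* r k := ZMod.castHom (pow_dvd_pow 2 (Nat.le_succ k)) _

lemma pr_natCast (k c : ℕ) : pr k (c : R k) = (c : r k) := map_natCast _ _

lemma pr_val (k : ℕ) (x : R k) : pr k x = ((x.val : ℕ) : r k) := by
  conv_lhs => rw [← ZMod.natCast_zmod_val x]
  exact map_natCast _ _

lemma two_pow_ne_zero (k : ℕ) : ((2 ^ k : ℕ) : R k) ≠ 0 := by
  rw [Ne, ZMod.natCast_eq_zero_iff]
  intro h
  have h1 := Nat.le_of_dvd (by positivity) h
  have h2 : (2:ℕ) ^ k < 2 ^ (k+1) := Nat.pow_lt_pow_succ one_lt_two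
  omega

lemma ker_iff {k : ℕ} (d : R k) : pr k d = 0 ↔ d = 0 ∨ d = ((2 ^ k : ℕ) : R k) := by
  constructor
  · intro h
    rw [pr_val, ZMod.natCast_eq_zero_iff] at h
    obtain ⟨t, ht⟩ := h
    have hlt : d.val < 2 ^ (k + 1) := ZMod.val_lt d
    have ht2 : t < 2 := by
      by_contra hge
      push_neg at hge
      have h3 : 2 ^ k * 2 ≤ 2 ^ k * t := Nat.mul_le_mul_left _ hge
      have h4 : (2:ℕ) ^ (k+1) = 2 ^ k * 2 := pow_succ 2 k
      omega
    have hd : d = ((d.val : ℕ) : R k) := (ZMod.natCast_zmod_val d).symm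
    interval_cases t
    · left; rw [hd, ht]; simp
    · right; rw [hd, ht]; simp
  · rintro (rfl | rfl)
    · simp
    · rw [pr_natCast, ZMod.natCast_self]

lemma pow_cast_mul_eq_zero {j a b : ℕ} (h : j ≤ a + b) :
    ((2 ^ a : ℕ) : ZMod (2 ^ j)) * ((2 ^ b : ℕ) : ZMod (2 ^ j)) = 0 := by
  rw [← Nat.cast_mul, ← pow_add, ZMod.natCast_eq_zero_iff]
  exact pow_dvd_pow 2 h

lemma sq_congr {k : ℕ} (hk : 1 ≤ k) {x y : R k} (h : pr k x = pr k y) : x ^ 2 = y ^ 2 := by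
  have h0 : pr k (y - x) = 0 := by rw [map_sub, h, sub_self]
  rcases (ker_iff _).1 h0 with h1 | h1
  · rw [sub_eq_zero] at h1; rw [h1]
  · have hy : y = x + ((2 ^ k : ℕ) : R k) := by rw [← h1]; ring
    rw [hy]
    have h2 : ((2 ^ 1 : ℕ) : R k) * ((2 ^ k : ℕ) : R k) = 0 :=
      pow_cast_mul_eq_zero (j:=k+1) (a:=1) (b:=k) (by omega)
    have h3 : ((2 ^ k : ℕ) : R k) * ((2 ^ k : ℕ) : R k) = 0 :=
      pow_cast_mul_eq_zero (j:=k+1) (a:=k) (b:=k) (by omega)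
    have e : (x + ((2^k:ℕ) : R k))^2
        = x^2 + (((2^1:ℕ):R k) * ((2^k:ℕ):R k)) * x + ((2^k:ℕ):R k) * ((2^k:ℕ):R k) := by
      push_cast; ring
    rw [e, h2, h3, zero_mul, add_zero, add_zero]

lemma isUnit_iff_val_odd {j : ℕ} (hj : 1 ≤ j) (u : ZMod (2 ^ j)) :
    IsUnit u ↔ Odd u.val := by
  conv_lhs => rw [← ZMod.natCast_zmod_val u]
  rw [ZMod.isUnit_iff_coprime, Nat.coprime_pow_right_iff hj, Nat.coprime_two_right]

lemma natCast_zmod_two_eq_one_iff (n : ℕ) : ((n : ZMod 2) = 1) ↔ n % 2 = 1 := by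
  rw [← ZMod.natCast_mod n 2]
  rcases Nat.mod_two_eq_zero_or_one n with h2 | h2 <;> rw [h2] <;> simp

lemma isUnit_iff_cast_two {j : ℕ} (hj : 1 ≤ j) (u : ZMod (2 ^ j)) :
    IsUnit u ↔ ((u.val : ℕ) : ZMod 2) = 1 := by
  rw [isUnit_iff_val_odd hj, Nat.odd_iff, natCast_zmod_two_eq_one_iff]

lemma isUnit_add_even {j : ℕ} (hj : 1 ≤ j) (x : ZMod (2 ^ j)) {c : ℕ} (hc : 2 ∣ c) :
    IsUnit (x + (c : ZMod (2 ^ j))) ↔ IsUnit x := by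
  set ρ : ZMod (2 ^ j) →+* ZMod 2 := ZMod.castHom (dvd_pow_self 2 (by omega)) _ with hρ
  have key : ∀ v : ZMod (2 ^ j), IsUnit v ↔ ρ v = 1 := by
    intro v
    rw [isUnit_iff_cast_two hj]
    have : ρ v = ((v.val : ℕ) : ZMod 2) := by
      conv_lhs => rw [← ZMod.natCast_zmod_val v]
      exact map_natCast _ _
    rw [this]
  rw [key, key, map_add, map_natCast,
    (ZMod.natCast_eq_zero_iff c 2).2 hc, add_zero]

lemma odd_int_cast_two {m : ℤ} (hm : Odd m) : (m : ZMod 2) = 1 := by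
  obtain ⟨t, rfl⟩ := hm
  push_cast
  have h2 : (2 : ZMod 2) = 0 := by decide
  rw [h2]; ring

lemma exists_unit {j : ℕ} (hj : 1 ≤ j) {m : ℤ} (hm : Odd m) (b : Fin 4 → ZMod (2 ^ j))
    (hb : (∑ i, b i ^ 2) = (m : ZMod (2 ^ j))) : ∃ i, IsUnit (b i) := by
  by_contra h
  push_neg at h
  set ρ : ZMod (2 ^ j) →+* ZMod 2 := ZMod.castHom (dvd_pow_self 2 (by omega)) _ with hρ
  have h2 : ∑ i, ρ (b i) ^ 2 = (m : ZMod 2) := by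
    have := congrArg ρ hb
    rw [map_sum, map_intCast] at this
    simpa [map_pow] using this
  have hz : ∀ i, ρ (b i) = 0 := by
    intro i
    have hu := h i
    rw [isUnit_iff_cast_two hj] at hu
    have hv : ρ (b i) = (((b i).val : ℕ) : ZMod 2) := by
      conv_lhs => rw [← ZMod.natCast_zmod_val (b i)]
      exact map_natCast _ _
    rw [hv]
    have : ∀ a : ZMod 2, a ≠ 1 → a = 0 := by decide
    exact this _ hu
  rw [odd_int_cast_two hm] at h2
  simp only [hz] at h2
  simp at h2

def L {k : ℕ} (b : Fin 4 → r k) : Fin 4 → R k := fun i => (((b i).val : ℕ) : R k)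

lemma pr_L {k : ℕ} (b : Fin 4 → r k) (i : Fin 4) : pr k (L b i) = b i := by
  rw [L, pr_natCast, ZMod.natCast_zmod_val]

def J {k : ℕ} (b : Fin 4 → r k) : Fin 4 :=
  if IsUnit (b 0) then 0 else if IsUnit (b 1) then 1 else if IsUnit (b 2) then 2 else 3

lemma isUnit_J {k : ℕ} {b : Fin 4 → r k} (h : ∃ i, IsUnit (b i)) : IsUnit (b (J b)) := by
  unfold J
  split_ifs with h0 h1 h2
  · exact h0
  · exact h1
  · exact h2
  · obtain ⟨i, hi⟩ := h
    fin_cases i <;> tauto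

lemma J_congr {k : ℕ} {b b' : Fin 4 → r k} (h : ∀ i, IsUnit (b i) ↔ IsUnit (b' i)) :
    J b = J b' := by
  unfold J
  simp only [h 0, h 1, h 2]

def sw {k : ℕ} (b : Fin 4 → r k) : Fin 4 → r k :=
  fun i => b i + if i = J b then ((2 ^ (k - 1) : ℕ) : r k) else 0

lemma sw_isUnit {k : ℕ} (hk : 2 ≤ k) (b : Fin 4 → r k) (i : Fin 4) :
    IsUnit (sw b i) ↔ IsUnit (b i) := by
  unfold sw
  split_ifs with h
  · exact isUnit_add_even (by omega) _ (dvd_pow_self 2 (by omega))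
  · rw [add_zero]

lemma J_sw {k : ℕ} (hk : 2 ≤ k) (b : Fin 4 → r k) : J (sw b) = J b :=
  J_congr (fun i => sw_isUnit hk b i)

lemma half_add_half {k : ℕ} (hk : 1 ≤ k) :
    ((2 ^ (k - 1) : ℕ) : r k) + ((2 ^ (k - 1) : ℕ) : r k) = 0 := by
  rw [← Nat.cast_add]
  have : (2:ℕ) ^ (k - 1) + 2 ^ (k - 1) = 2 ^ k := by
    have : (2:ℕ) ^ k = 2 ^ (k - 1) * 2 := by
      rw [← pow_succ]; congr 1; omega
    omega
  rw [this, ZMod.natCast_self]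

lemma sw_apply {k : ℕ} (b : Fin 4 → r k) (i : Fin 4) :
    sw b i = b i + if i = J b then ((2 ^ (k - 1) : ℕ) : r k) else 0 := rfl

lemma sw_sw {k : ℕ} (hk : 2 ≤ k) (b : Fin 4 → r k) : sw (sw b) = b := by
  funext i
  rw [sw_apply (sw b) i, sw_apply b i, J_sw hk]
  by_cases h : i = J b
  · simp only [if_pos h]
    rw [add_assoc, half_add_half (by omega : 1 ≤ k), add_zero]
  · simp only [if_neg h, add_zero]

lemma sq_add_half {k : ℕ} (hk : 2 ≤ k) (x : r k) :
    (x + ((2 ^ (k - 1) : ℕ) : r k)) ^ 2 = x ^ 2 := by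
  have h2 : ((2 ^ 1 : ℕ) : r k) * ((2 ^ (k-1) : ℕ) : r k) = 0 :=
    pow_cast_mul_eq_zero (j:=k) (a:=1) (b:=k-1) (by omega)
  have h3 : ((2 ^ (k-1) : ℕ) : r k) * ((2 ^ (k-1) : ℕ) : r k) = 0 :=
    pow_cast_mul_eq_zero (j:=k) (a:=k-1) (b:=k-1) (by omega)
  have e : (x + ((2^(k-1):ℕ) : r k))^2
      = x^2 + (((2^1:ℕ): r k) * ((2^(k-1):ℕ): r k)) * x
        + ((2^(k-1):ℕ): r k) * ((2^(k-1):ℕ): r k) := by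
    push_cast; ring
  rw [e, h2, h3, zero_mul, add_zero, add_zero]

lemma Q_sw {k : ℕ} (hk : 2 ≤ k) (b : Fin 4 → r k) :
    (∑ i, sw b i ^ 2) = ∑ i, b i ^ 2 := by
  apply Finset.sum_congr rfl
  intro i _
  unfold sw
  split_ifs with h
  · exact sq_add_half hk (b i)
  · rw [add_zero]

lemma pow_mul_odd {k : ℕ} {n : ℕ} (hn : Odd n) :
    ((2 ^ k : ℕ) : R k) * (n : R k) = ((2 ^ k : ℕ) : R k) := by
  obtain ⟨t, rfl⟩ := hn
  have h0 : ((2 ^ (k + 1) : ℕ) : R k) = 0 := ZMod.natCast_self _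
  push_cast at h0 ⊢
  linear_combination t * h0

lemma L_flip {k : ℕ} (hk : 3 ≤ k) (b : Fin 4 → r k) (hgood : IsUnit (b (J b))) :
    (∑ i, L (sw b) i ^ 2) = (∑ i, L b i ^ 2) + ((2 ^ k : ℕ) : R k) := by
  have hk1 : 1 ≤ k := by omega
  have hsum : ∀ f g : Fin 4 → R k, (∀ i, i ≠ J b → f i = g i) →
      f (J b) = g (J b) + ((2 ^ k : ℕ) : R k) →
      ∑ i, f i = (∑ i, g i) + ((2 ^ k : ℕ) : R k) := by
    intro f g hne hJ
    rw [← Finset.add_sum_erase univ f (mem_univ (J b)),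
      ← Finset.add_sum_erase univ g (mem_univ (J b)), hJ,
      Finset.sum_congr rfl (fun i hi => hne i (Finset.ne_of_mem_erase hi))]
    ring
  apply hsum
  · intro i hi
    apply sq_congr hk1
    rw [pr_L, pr_L, sw_apply, if_neg hi, add_zero]
  · have e1 : L (sw b) (J b) ^ 2 = (L b (J b) + ((2 ^ (k-1) : ℕ) : R k)) ^ 2 := by
      apply sq_congr hk1
      rw [pr_L, map_add, pr_L, pr_natCast, sw_apply, if_pos rfl]
    have h2 : ((2 ^ 1 : ℕ) : R k) * ((2 ^ (k-1) : ℕ) : R k) = ((2 ^ k : ℕ) : R k) := by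
      rw [← Nat.cast_mul, ← pow_add]
      congr 2
      omega
    have h3 : ((2 ^ (k-1) : ℕ) : R k) * ((2 ^ (k-1) : ℕ) : R k) = 0 :=
      pow_cast_mul_eq_zero (j:=k+1) (a:=k-1) (b:=k-1) (by omega)
    have hodd : Odd ((b (J b)).val) := (isUnit_iff_val_odd hk1 _).1 hgood
    have h4 : ((2 ^ k : ℕ) : R k) * L b (J b) = ((2 ^ k : ℕ) : R k) := pow_mul_odd hodd
    have e2 : (L b (J b) + ((2 ^ (k-1) : ℕ) : R k)) ^ 2
        = L b (J b) ^ 2 + (((2^1:ℕ):R k) * ((2^(k-1):ℕ):R k)) * L b (J b)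
          + ((2^(k-1):ℕ):R k) * ((2^(k-1):ℕ):R k) := by
      push_cast
      ring
    rw [e1, e2, h2, h3, h4, add_zero]

lemma fiber_card {k : ℕ} (b : Fin 4 → r k) :
    (univ.filter (fun x : Fin 4 → R k => ∀ i, pr k (x i) = b i)).card = 16 := by
  classical
  have he : univ.filter (fun x : Fin 4 → R k => ∀ i, pr k (x i) = b i)
      = Fintype.piFinset (fun i => univ.filter (fun a => pr k a = b i)) := by
    ext x
    simp [Fintype.mem_piFinset]
  rw [he, Fintype.card_piFinset]
  have h1 : ∀ i, (univ.filter (fun a : R k => pr k a = b i)).card = 2 := by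
    intro i
    have hset : univ.filter (fun a : R k => pr k a = b i)
        = {L b i, L b i + ((2 ^ k : ℕ) : R k)} := by
      ext a
      simp only [mem_filter, mem_univ, true_and, mem_insert, mem_singleton]
      constructor
      · intro h
        have h0 : pr k (a - L b i) = 0 := by rw [map_sub, h, pr_L, sub_self]
        rcases (ker_iff _).1 h0 with h1 | h1
        · left
          rw [sub_eq_zero] at h1
          exact h1
        · right
          rw [← h1]
          ring
      · rintro (rfl | rfl)
        · exact pr_L b i
        · rw [map_add, pr_L, pr_natCast, ZMod.natCast_self, add_zero]
    rw [hset, Finset.card_pair]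
    intro h
    exact two_pow_ne_zero k (left_eq_add.mp h)
  rw [Finset.prod_congr rfl (fun i _ => h1 i), Finset.prod_const]
  norm_num

lemma step (k : ℕ) (hk : 3 ≤ k) (m : ℤ) (hm : Odd m) :
    (univ.filter fun x : Fin 4 → R k => (∑ i, x i ^ 2) = (m : R k)).card
      = 8 * (univ.filter fun b : Fin 4 → r k => (∑ i, b i ^ 2) = (m : r k)).card := by
  classical
  have hk1 : 1 ≤ k := by omega
  set A : Finset (Fin 4 → R k) :=
    univ.filter fun x : Fin 4 → R k => (∑ i, x i ^ 2) = (m : R k) with hA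
  set B : Finset (Fin 4 → r k) :=
    univ.filter fun b : Fin 4 → r k => (∑ i, b i ^ 2) = (m : r k) with hB
  set E : (Fin 4 → r k) → Prop := fun b => (∑ i, L b i ^ 2) = (m : R k) with hE
  have hmap : ∀ x ∈ A, (fun i => pr k (x i)) ∈ B := by
    intro x hx
    rw [hA, mem_filter] at hx
    rw [hB, mem_filter]
    refine ⟨mem_univ _, ?_⟩
    have := congrArg (pr k) hx.2
    rw [map_sum, map_intCast] at this
    simpa [map_pow] using this
  rw [Finset.card_eq_sum_card_fiberwise hmap]
  have hLval : ∀ b ∈ B, (∑ i, L b i ^ 2) = (m : R k)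
      ∨ (∑ i, L b i ^ 2) = (m : R k) + ((2 ^ k : ℕ) : R k) := by
    intro b hb
    rw [hB, mem_filter] at hb
    have h0 : pr k ((∑ i, L b i ^ 2) - (m : R k)) = 0 := by
      rw [map_sub, map_sum, map_intCast]
      simp only [map_pow, pr_L]
      rw [hb.2, sub_self]
    rcases (ker_iff _).1 h0 with h1 | h1
    · left; rw [sub_eq_zero] at h1; exact h1
    · right; rw [← h1]; ring
  have hfib : ∀ b ∈ B, (A.filter fun x => (fun i => pr k (x i)) = b).card
      = if E b then 16 else 0 := by
    intro b hb
    have hQconst : ∀ x : Fin 4 → R k, (∀ i, pr k (x i) = b i) →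
        (∑ i, x i ^ 2) = ∑ i, L b i ^ 2 := by
      intro x hx
      refine Finset.sum_congr rfl fun i _ => ?_
      exact sq_congr hk1 (by rw [hx i, pr_L])
    split_ifs with hEb
    · rw [show (A.filter fun x => (fun i => pr k (x i)) = b)
          = univ.filter (fun x : Fin 4 → R k => ∀ i, pr k (x i) = b i) from ?_]
      · exact fiber_card b
      · ext x
        simp only [hA, Finset.filter_filter, mem_filter, mem_univ, true_and, funext_iff]
        constructor
        · exact fun h => h.2
        · intro h
          exact ⟨by rw [hQconst x h]; exact hEb, h⟩
    · rw [Finset.card_eq_zero, Finset.filter_eq_empty_iff]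
      intro x hx
      rw [hA, mem_filter] at hx
      rw [funext_iff]
      intro h
      exact hEb (show E b from by simp only [hE]; rw [← hQconst x h]; exact hx.2)
  rw [Finset.sum_congr rfl hfib, ← Finset.sum_filter, Finset.sum_const, smul_eq_mul]
  have hswB : ∀ b ∈ B, sw b ∈ B := by
    intro b hb
    rw [hB, mem_filter] at hb ⊢
    exact ⟨mem_univ _, by rw [Q_sw (by omega) b]; exact hb.2⟩
  have hgoodB : ∀ b ∈ B, IsUnit (b (J b)) := by
    intro b hb
    rw [hB, mem_filter] at hb
    exact isUnit_J (exists_unit hk1 hm b hb.2)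
  have hflip : ∀ b ∈ B, (E (sw b) ↔ ¬ E b) := by
    intro b hb
    have hL := L_flip hk b (hgoodB b hb)
    simp only [hE]
    constructor
    · intro h1 h2
      rw [hL, h2] at h1
      exact two_pow_ne_zero k (left_eq_add.mp h1.symm)
    · intro h2
      rcases hLval b hb with h3 | h3
      · exact absurd h3 h2
      · rw [hL, h3, add_assoc, ← Nat.cast_add]
        have h4 : (2:ℕ) ^ k + 2 ^ k = 2 ^ (k + 1) := by
          have : (2:ℕ) ^ (k+1) = 2 ^ k * 2 := pow_succ 2 k
          omega
        rw [h4, ZMod.natCast_self, add_zero]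
  have hinv : (B.filter E).card = (B.filter (fun b => ¬ E b)).card := by
    apply Finset.card_nbij' sw sw
    · intro b hb
      rw [mem_coe, mem_filter] at hb
      rw [mem_coe, mem_filter]
      exact ⟨hswB b hb.1, fun h => (hflip b hb.1).1 h hb.2⟩
    · intro b hb
      rw [mem_coe, mem_filter] at hb
      rw [mem_coe, mem_filter]
      exact ⟨hswB b hb.1, (hflip b hb.1).2 hb.2⟩
    · intro b hb
      exact sw_sw (by omega) b
    · intro b hb
      exact sw_sw (by omega) b
  have hsplit := Finset.card_filter_add_card_filter_not (s := B) (p := E)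
  rw [show (B.filter (fun a => E a)) = B.filter E from rfl]
  omega

lemma count_pow (m : ℤ) (hm : Odd m) (j : ℕ) (hj : 5 ≤ j) :
    (univ.filter fun x : Fin 4 → ZMod (2 ^ j) => (∑ i, x i ^ 2) = (m : ZMod (2 ^ j))).card
      = 2 ^ (3 * (j - 5)) *
        (univ.filter fun x : Fin 4 → ZMod (2 ^ 5) => (∑ i, x i ^ 2) = (m : ZMod (2 ^ 5))).card := by
  induction j, hj using Nat.le_induction with
  | base => norm_num
  | succ n hn ih =>
    have hn3 : 3 ≤ n := le_trans (by norm_num) hn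
    have h35 : 3 * (n + 1 - 5) = 3 * (n - 5) + 3 := by clear ih; omega
    have hstep := step n hn3 m hm
    rw [hstep, ih, h35, pow_add]
    ring

lemma card_eq (j : ℕ) (hj : 5 ≤ j) (m : ℤ) (hm : Odd m) :
    Nat.card {x : Fin 4 → ZMod (2 ^ j) //
        (∑ i, x i ^ 2) = (m : ZMod (2 ^ j)) ∧ ∃ i, IsUnit (x i)}
      = (univ.filter fun x : Fin 4 → ZMod (2 ^ j) =>
          (∑ i, x i ^ 2) = (m : ZMod (2 ^ j))).card := by
  classical
  have hiff : ∀ x : Fin 4 → ZMod (2 ^ j),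
      ((∑ i, x i ^ 2) = (m : ZMod (2 ^ j)) ∧ ∃ i, IsUnit (x i))
        ↔ (∑ i, x i ^ 2) = (m : ZMod (2 ^ j)) :=
    fun x => ⟨And.left, fun h => ⟨h, exists_unit (by omega) hm x h⟩⟩
  rw [Nat.card_congr (Equiv.subtypeEquivRight hiff), Nat.card_eq_fintype_card,
    Fintype.card_subtype]

end GoodLift2

/-- for `Q = x₁²+x₂²+x₃²+x₄²` over `ℤ/2^ν`, `ν ≥ 5`, and `m` odd,
the number of Good-type solutions (some coordinate a unit, i.e. odd) of
`Q(x) ≡ m (mod 2^ν)` equals `2^{3(ν-5)}` times the number of Good-type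
solutions mod `2⁵`. -/
theorem good_type_lifting_two (ν : ℕ) (hν : 5 ≤ ν) (m : ℤ) (hm : Odd m) :
    Nat.card {x : Fin 4 → ZMod (2 ^ ν) //
        (∑ i, x i ^ 2) = (m : ZMod (2 ^ ν)) ∧ ∃ i, IsUnit (x i)} =
      2 ^ (3 * (ν - 5)) *
        Nat.card {x : Fin 4 → ZMod (2 ^ 5) //
          (∑ i, x i ^ 2) = (m : ZMod (2 ^ 5)) ∧ ∃ i, IsUnit (x i)} := by
  rw [GoodLift2.card_eq ν hν m hm, GoodLift2.card_eq 5 (le_refl 5) m hm]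
  exact GoodLift2.count_pow m hm ν hν
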